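/- Let 𝓚 be a complex Hilbert space, T : 𝓚 →L[ℂ] 𝓚 a compact operator whose imaginary part ℑT := (2i)⁻¹(T - T*) is a positive operator, J : 𝓚 →L[ℂ] 𝓚 a bounded self-adjoint operator, and r ∈ ℝ. Then there exists s ∈ ℝ with s > ‖J‖ such that the operator 1 + r · T · (s·1 - J) on 𝓚 is invertible. -/

import Mathlib

open ContinuousLinearMap Complex Metric
open scoped NNReal InnerProductSpace

variable {𝓚 : Type*} [NormedAddCommGroup 𝓚] [InnerProductSpace ℂ 𝓚] [CompleteSpace 𝓚]

omit [CompleteSpace 𝓚] in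
lemma aux_subseq (K : 𝓚 →L[ℂ] 𝓚) (hK : IsCompactOperator ⇑K) (x : ℕ → 𝓚)
    (hx : ∀ n, ‖x n‖ ≤ 1) :
    ∃ (a : 𝓚) (φ : ℕ → ℕ), StrictMono φ ∧
      Filter.Tendsto (fun n => K (x (φ n))) Filter.atTop (nhds a) := by
  obtain ⟨C, hC, hsub⟩ := hK.image_closedBall_subset_compact 1
  have hmem : ∀ n, K (x n) ∈ C := fun n =>
    hsub ⟨x n, by simpa [Metric.mem_closedBall, dist_eq_norm] using hx n, rfl⟩
  obtain ⟨a, _, φ, hφ, hlim⟩ := hC.tendsto_subseq hmem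
  exact ⟨a, φ, hφ, hlim⟩

lemma aux_bounded_below (K : 𝓚 →L[ℂ] 𝓚) (hK : IsCompactOperator ⇑K)
    (hinj : Function.Injective ⇑(1 + K)) :
    ∃ c : ℝ, 0 < c ∧ ∀ x, c * ‖x‖ ≤ ‖(1 + K) x‖ := by
  by_contra h
  push_neg at h
  have key : ∀ n : ℕ, ∃ y : 𝓚, ‖y‖ = 1 ∧ ‖(1 + K) y‖ < 1 / (n + 1) := by
    intro n
    obtain ⟨x, hx⟩ := h (1 / (n + 1)) (by positivity)
    have hx0 : x ≠ 0 := by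
      rintro rfl; simp at hx
    have hxn : (0:ℝ) < ‖x‖ := norm_pos_iff.2 hx0
    refine ⟨‖x‖⁻¹ • x, ?_, ?_⟩
    · simp [norm_smul, inv_mul_cancel₀ hxn.ne']
    · rw [map_smul_of_tower, norm_smul, norm_inv, norm_norm]
      calc ‖x‖⁻¹ * ‖(1 + K) x‖ < ‖x‖⁻¹ * (1 / (n+1) * ‖x‖) := by
            exact mul_lt_mul_of_pos_left hx (by positivity)
        _ = 1 / (n + 1) * (‖x‖⁻¹ * ‖x‖) := by ring
        _ = 1 / (n + 1) := by rw [inv_mul_cancel₀ hxn.ne', mul_one]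
  choose y hy1 hy2 using key
  obtain ⟨a, φ, hφ, hlim⟩ := aux_subseq K hK y (fun n => (hy1 n).le)
  -- (1+K) (y n) → 0
  have hL0 : Filter.Tendsto (fun n => (1 + K) (y (φ n))) Filter.atTop (nhds 0) := by
    rw [tendsto_iff_norm_sub_tendsto_zero]
    apply squeeze_zero (fun n => by positivity) (fun n => ?_)
      (tendsto_one_div_add_atTop_nhds_zero_nat.comp hφ.tendsto_atTop)
    simpa using (hy2 (φ n)).le
  have hy_lim : Filter.Tendsto (fun n => y (φ n)) Filter.atTop (nhds (-a)) := by
    have : ∀ n, y (φ n) = (1 + K) (y (φ n)) - K (y (φ n)) := by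
      intro n; simp [ContinuousLinearMap.add_apply]
    rw [show (fun n => y (φ n)) = fun n => (1 + K) (y (φ n)) - K (y (φ n)) from funext this]
    simpa using hL0.sub hlim
  have hnorm : ‖(-a : 𝓚)‖ = 1 := by
    have := (continuous_norm.tendsto _).comp hy_lim
    have h2 : Filter.Tendsto (fun _ : ℕ => (1:ℝ)) Filter.atTop (nhds 1) := tendsto_const_nhds
    have h1 : Filter.Tendsto (fun n => ‖y (φ n)‖) Filter.atTop (nhds ‖(-a : 𝓚)‖) := this
    simp_rw [hy1] at h1
    exact (tendsto_nhds_unique h1 h2).symm ▸ rfl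
  have hKa : (1 + K) (-a) = 0 :=
    tendsto_nhds_unique (((1 + K).continuous.tendsto _).comp hy_lim) hL0
  have : (-a : 𝓚) = 0 := hinj (by simpa using hKa)
  rw [this] at hnorm
  simp at hnorm

lemma aux_isClosed_range (K : 𝓚 →L[ℂ] 𝓚) (hK : IsCompactOperator ⇑K)
    (hinj : Function.Injective ⇑(1 + K)) :
    IsClosed (Set.range ⇑(1 + K)) := by
  obtain ⟨c, hc, hbdd⟩ := aux_bounded_below K hK hinj
  have : AntilipschitzWith (⟨c, hc.le⟩ : ℝ≥0)⁻¹ ⇑(1 + K) := by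
    apply (1 + K).antilipschitz_of_bound
    intro x
    show ‖x‖ ≤ c⁻¹ * ‖(1 + K) x‖
    rw [inv_mul_eq_div, le_div_iff₀ (by exact_mod_cast hc)]
    rw [mul_comm]
    exact hbdd x
  exact this.isClosed_range (1 + K).uniformContinuous

omit [CompleteSpace 𝓚] in
lemma aux_pow (K : 𝓚 →L[ℂ] 𝓚) (hK : IsCompactOperator ⇑K) (n : ℕ) :
    ∃ C : 𝓚 →L[ℂ] 𝓚, IsCompactOperator ⇑C ∧ (1 + K) ^ n = 1 + C := by
  induction n with
  | zero => exact ⟨0, isCompactOperator_zero, by simp⟩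
  | succ n ih =>
    obtain ⟨C, hC, hCeq⟩ := ih
    refine ⟨K + C + C * K, ?_, ?_⟩
    · have h1 : IsCompactOperator ⇑(C * K) := by
        have := hC.comp_clm K
        simpa [Function.comp] using this
      have := (hK.add hC).add h1
      simpa using this
    · rw [pow_succ, hCeq]
      noncomm_ring

lemma fredholm_surjective (K : 𝓚 →L[ℂ] 𝓚) (hK : IsCompactOperator ⇑K)
    (hinj : Function.Injective ⇑(1 + K)) :
    Function.Surjective ⇑(1 + K) := by
  set L : 𝓚 →L[ℂ] 𝓚 := 1 + K with hL
  by_contra hsurj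
  simp only [Function.Surjective, not_forall] at hsurj
  obtain ⟨y, hy⟩ := hsurj
  rw [not_exists] at hy
  -- powers are injective with closed range
  have hpowinj : ∀ n : ℕ, Function.Injective ⇑(L ^ n) := by
    intro n
    induction n with
    | zero => rw [pow_zero]; exact fun a b h => by simpa using h
    | succ n ih =>
      rw [pow_succ]
      exact ih.comp hinj
  set M : ℕ → Submodule ℂ 𝓚 := fun n => LinearMap.range ((L ^ n : 𝓚 →L[ℂ] 𝓚) : 𝓚 →ₗ[ℂ] 𝓚) with hM
  have hMclosed : ∀ n, IsClosed ((M n : Set 𝓚)) := by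
    intro n
    obtain ⟨C, hC, hCeq⟩ := aux_pow K hK n
    have h1 : Function.Injective ⇑(1 + C) := by rw [← hCeq]; exact hpowinj n
    have := aux_isClosed_range C hC h1
    have heq : (M n : Set 𝓚) = Set.range ⇑(1 + C) := by
      rw [hM]; show Set.range ⇑((1 + K) ^ n) = _; rw [hCeq]
    rwa [heq]
  have hanti : ∀ n, M (n + 1) ≤ M n := by
    intro n
    rintro x ⟨z, rfl⟩
    exact ⟨L z, by rw [pow_succ]; rfl⟩
  have hanti' : Antitone M := antitone_nat_of_succ_le hanti
  have hstep : ∀ (n : ℕ) (x : 𝓚), x ∈ M n → L x ∈ M (n + 1) := by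
    rintro n x ⟨z, rfl⟩
    exact ⟨z, by rw [pow_succ']; rfl⟩
  have hstrict : ∀ n, (L ^ n) y ∈ M n ∧ (L ^ n) y ∉ M (n + 1) := by
    intro n
    refine ⟨⟨y, rfl⟩, ?_⟩
    rintro ⟨z, hz⟩
    rw [pow_succ] at hz
    exact hy z (hpowinj n (show (L ^ n) (L z) = (L ^ n) y from hz))
  have hexists : ∀ n : ℕ, ∃ x : 𝓚, ‖x‖ = 1 ∧ x ∈ M n ∧ x ∈ (M (n + 1))ᗮ := by
    intro n
    have : CompleteSpace (M (n+1)) := (hMclosed (n+1)).completeSpace_coe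
    set z := (L ^ n) y with hz
    set w := z - (Submodule.orthogonalProjection (M (n+1)) z : 𝓚) with hw
    have hw1 : w ∈ (M (n+1))ᗮ := Submodule.sub_starProjection_mem_orthogonal (K := M (n+1)) z
    have hw2 : w ∈ M n := by
      apply Submodule.sub_mem _ (hstrict n).1
      exact hanti n (Submodule.orthogonalProjection (M (n+1)) z).2
    have hw0 : w ≠ 0 := by
      intro h
      apply (hstrict n).2
      rw [sub_eq_zero] at h
      rw [← hz, h]
      exact (Submodule.orthogonalProjection (M (n+1)) z).2
    refine ⟨‖w‖⁻¹ • w, ?_, ?_, ?_⟩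
    · simp [norm_smul, inv_mul_cancel₀ (norm_ne_zero_iff.2 hw0)]
    · exact Submodule.smul_of_tower_mem _ _ hw2
    · exact Submodule.smul_of_tower_mem _ _ hw1
  choose x hx1 hx2 hx3 using hexists
  have hsep : ∀ m n, n < m → (1:ℝ) ≤ ‖K (x n) - K (x m)‖ := by
    intro m n hnm
    set v := L (x n) - L (x m) + x m with hv
    have hvmem : v ∈ M (n+1) := by
      refine Submodule.add_mem _ (Submodule.sub_mem _ (hstep n _ (hx2 n)) ?_) ?_
      · exact hanti' (show n+1 ≤ m+1 by omega) (hstep m _ (hx2 m))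
      · exact hanti' (show n+1 ≤ m by omega) (hx2 m)
    have hKeq : K (x n) - K (x m) = v - x n := by
      rw [hv, hL]
      simp only [ContinuousLinearMap.add_apply, ContinuousLinearMap.one_apply]
      abel
    have horth : ⟪v, x n⟫_ℂ = 0 := (Submodule.mem_orthogonal _ _).1 (hx3 n) v hvmem
    have hns : ‖v - x n‖ ^ 2 = ‖v‖ ^ 2 - 2 * RCLike.re ⟪v, x n⟫_ℂ + ‖x n‖ ^ 2 :=
      @norm_sub_sq ℂ _ _ _ _ v (x n)
    rw [horth] at hns
    simp only [map_zero, mul_zero, sub_zero, hx1 n] at hns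
    rw [hKeq]
    nlinarith [norm_nonneg (v - x n), sq_nonneg ‖v‖]
  obtain ⟨a, φ, hφ, hlim⟩ := aux_subseq K hK x (fun n => (hx1 n).le)
  have hcauchy : CauchySeq (fun n => K (x (φ n))) := hlim.cauchySeq
  rw [Metric.cauchySeq_iff] at hcauchy
  obtain ⟨N, hN⟩ := hcauchy 1 one_pos
  have h1 := hN (N+1) (by omega) N (le_refl N)
  rw [dist_eq_norm] at h1
  have h2 := hsep (φ (N+1)) (φ N) (hφ (by omega))
  rw [← norm_neg] at h2
  simp only [neg_sub] at h2
  exact absurd h1 (not_lt.2 h2)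

lemma fredholm_eigen (K : 𝓚 →L[ℂ] 𝓚) (hK : IsCompactOperator ⇑K)
    (h : ¬ IsUnit (1 + K)) : ∃ ψ : 𝓚, ψ ≠ 0 ∧ ψ + K ψ = 0 := by
  rw [ContinuousLinearMap.isUnit_iff_bijective] at h
  have hninj : ¬ Function.Injective ⇑(1 + K) := by
    intro hinj
    exact h ⟨hinj, fredholm_surjective K hK hinj⟩
  rw [Function.not_injective_iff] at hninj
  obtain ⟨a, b, hab, hne⟩ := hninj
  refine ⟨a - b, sub_ne_zero.2 hne, ?_⟩
  have : (1 + K) (a - b) = 0 := by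
    rw [map_sub, hab, sub_self]
  simpa [ContinuousLinearMap.add_apply] using this

lemma pos_apply_eq_zero (A : 𝓚 →L[ℂ] 𝓚) (hA : A.IsPositive) {u : 𝓚}
    (h : RCLike.re ⟪A u, u⟫_ℂ = 0) : A u = 0 := by
  have hsa : ContinuousLinearMap.adjoint A = A :=
    ContinuousLinearMap.isSelfAdjoint_iff'.1 hA.isSelfAdjoint
  have e1 : ⟪A (A u), u⟫_ℂ = ⟪A u, A u⟫_ℂ := by
    conv_lhs => rw [← hsa]
    rw [ContinuousLinearMap.adjoint_inner_left, hsa]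
  set C : ℝ := RCLike.re ⟪A (A u), A u⟫_ℂ with hC
  have hC0 : 0 ≤ C := hA.2 (A u)
  have key : ∀ t : ℝ, 0 ≤ 2 * t * ‖A u‖ ^ 2 + t ^ 2 * C := by
    intro t
    have h0 := hA.2 (u + (t : ℂ) • A u)
    rw [ContinuousLinearMap.reApplyInnerSelf] at h0
    simp only [map_add, map_smul, inner_add_left, inner_add_right, inner_smul_left,
      inner_smul_right, Complex.conj_ofReal, e1] at h0
    simp only [mul_add, map_add, RCLike.re_ofReal_mul, RCLike.re_to_complex,
      Complex.re_ofReal_mul, Complex.add_re, inner_self_eq_norm_sq, h] at h0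
    have e2 : (⟪A u, A u⟫_ℂ).re = ‖A u‖^2 := by
      rw [← RCLike.re_to_complex]; exact inner_self_eq_norm_sq _
    have e3 : (⟪A (A u), A u⟫_ℂ).re = C := by rw [hC, RCLike.re_to_complex]
    rw [e2, e3] at h0
    nlinarith [h0]
  by_contra hne
  have hA0 : 0 < ‖A u‖ ^ 2 := by
    have := norm_pos_iff.2 hne
    positivity
  have hC1 : (0:ℝ) < C + 1 := by linarith
  have hthis := key (-(‖A u‖ ^ 2) / (C + 1))
  have h2 : 0 ≤ (2 * (-(‖A u‖ ^ 2) / (C + 1)) * ‖A u‖ ^ 2 + (-(‖A u‖ ^ 2) / (C + 1)) ^ 2 * C) * (C+1)^2 :=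
    mul_nonneg hthis (by positivity)
  have h3 : (2 * (-(‖A u‖ ^ 2) / (C + 1)) * ‖A u‖ ^ 2 + (-(‖A u‖ ^ 2) / (C + 1)) ^ 2 * C) * (C+1)^2
      = (‖A u‖ ^ 2)^2 * (-C-2) := by
    field_simp
    ring
  rw [h3] at h2
  nlinarith [h2, hA0, hC0]

lemma bad_point (T : 𝓚 →L[ℂ] 𝓚) (hT : IsCompactOperator ⇑T)
    (hIm : (((2 : ℂ) * Complex.I)⁻¹ • (T - adjoint T)).IsPositive)
    (J : 𝓚 →L[ℂ] 𝓚) (hJ : IsSelfAdjoint J) (r : ℝ) (s : ℝ) (hs : ‖J‖ < s)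
    (hnu : ¬ IsUnit (1 + (r : ℂ) • (T * ((s : ℂ) • (1 : 𝓚 →L[ℂ] 𝓚) - J)))) :
    ∃ ψ u : 𝓚, ψ ≠ 0 ∧ ψ = -((r : ℂ) • T u) ∧ u = (s : ℂ) • ψ - J ψ ∧
      adjoint T u = T u := by
  set B : 𝓚 →L[ℂ] 𝓚 := (s : ℂ) • (1 : 𝓚 →L[ℂ] 𝓚) - J with hB
  set A : 𝓚 →L[ℂ] 𝓚 := (r : ℂ) • (T * B) with hA
  have hAc : IsCompactOperator ⇑A := by
    have h1 : IsCompactOperator (⇑T ∘ ⇑B) := hT.comp_clm B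
    have h2 := h1.smul (r : ℂ)
    have : ⇑A = fun x => (r : ℂ) • (⇑T ∘ ⇑B) x := by
      funext x
      simp [hA, ContinuousLinearMap.mul_apply]
    rwa [this]
  obtain ⟨ψ, hψ0, hψ⟩ := fredholm_eigen A hAc hnu
  set u : 𝓚 := B ψ with hu
  have heig : ψ = -((r : ℂ) • T u) := by
    have : A ψ = (r : ℂ) • T u := by
      simp [hA, ContinuousLinearMap.mul_apply]
      rfl
    rw [← this]
    linear_combination (norm := module) hψ
  have hr0 : r ≠ 0 := by
    rintro rfl
    apply hψ0
    simpa using heig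
  have huψ : u = (s : ℂ) • ψ - J ψ := by
    simp [hu, hB, ContinuousLinearMap.sub_apply]
  -- the inner product p = ⟪ψ, u⟫ is real and positive
  have hψn : (0:ℝ) < ‖ψ‖ := norm_pos_iff.2 hψ0
  have hadJ : adjoint J = J := hJ
  have hJre : (starRingEnd ℂ) ⟪ψ, J ψ⟫_ℂ = ⟪ψ, J ψ⟫_ℂ := by
    rw [inner_conj_symm]
    conv_lhs => rw [← hadJ]
    rw [ContinuousLinearMap.adjoint_inner_left]
  have hJim : (⟪ψ, J ψ⟫_ℂ).im = 0 := by
    have h' := congrArg Complex.im hJre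
    simp only [Complex.conj_im] at h'
    linarith
  have hself_im : (⟪ψ, ψ⟫_ℂ).im = 0 := by
    rw [← RCLike.im_to_complex]; exact inner_self_im ψ
  have hself_re : (⟪ψ, ψ⟫_ℂ).re = ‖ψ‖^2 := by
    rw [← RCLike.re_to_complex]; exact inner_self_eq_norm_sq ψ
  have hpval : ⟪ψ, u⟫_ℂ = (s : ℂ) * ⟪ψ, ψ⟫_ℂ - ⟪ψ, J ψ⟫_ℂ := by
    rw [huψ, inner_sub_right, inner_smul_right]
  have hpim : (⟪ψ, u⟫_ℂ).im = 0 := by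
    rw [hpval]
    simp [Complex.sub_im, Complex.mul_im, hself_im, hJim]
    exact Or.inr (by rw [← Complex.ofReal_pow, Complex.ofReal_im])
  have hpre : 0 < (⟪ψ, u⟫_ℂ).re := by
    rw [hpval]
    have hb : (⟪ψ, J ψ⟫_ℂ).re ≤ ‖J‖ * ‖ψ‖^2 := by
      calc (⟪ψ, J ψ⟫_ℂ).re ≤ ‖⟪ψ, J ψ⟫_ℂ‖ := Complex.re_le_norm _
        _ ≤ ‖ψ‖ * ‖J ψ‖ := norm_inner_le_norm _ _
        _ ≤ ‖ψ‖ * (‖J‖ * ‖ψ‖) := by gcongr; exact J.le_opNorm ψ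
        _ = ‖J‖ * ‖ψ‖^2 := by ring
    simp only [Complex.sub_re, Complex.mul_re, Complex.ofReal_re, Complex.ofReal_im,
      hself_re, hself_im]
    nlinarith [hψn, hb, hs, mul_pos (sub_pos.2 hs) (pow_pos hψn 2)]
  -- hence ⟪T u, u⟫ has zero imaginary part
  have hz : ⟪ψ, u⟫_ℂ = -(r : ℂ) * ⟪T u, u⟫_ℂ := by
    conv_lhs => rw [heig]
    rw [inner_neg_left, inner_smul_left]
    simp [Complex.conj_ofReal]
  have hzim : (⟪T u, u⟫_ℂ).im = 0 := by
    have h1 := congrArg Complex.im hz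
    rw [hpim] at h1
    simp only [Complex.neg_im, Complex.mul_im, Complex.neg_re, Complex.ofReal_re,
      Complex.neg_im, Complex.ofReal_im] at h1
    have : r * (⟪T u, u⟫_ℂ).im = 0 := by linarith [h1]
    exact (mul_eq_zero.1 this).resolve_left hr0
  -- so the positive operator kills u
  have hGu : (((2 : ℂ) * Complex.I)⁻¹ • (T - adjoint T)) u = 0 := by
    apply pos_apply_eq_zero _ hIm
    have hconj : (starRingEnd ℂ) ⟪T u, u⟫_ℂ = ⟪T u, u⟫_ℂ := by
      rw [Complex.conj_eq_iff_im]
      exact hzim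
    have h2 : ⟪(T - adjoint T) u, u⟫_ℂ = 0 := by
      rw [ContinuousLinearMap.sub_apply, inner_sub_left,
        ContinuousLinearMap.adjoint_inner_left]
      have h3 : ⟪u, T u⟫_ℂ = ⟪T u, u⟫_ℂ := by rw [← hconj, inner_conj_symm]
      rw [h3, sub_self]
    rw [ContinuousLinearMap.smul_apply, inner_smul_left, h2]
    simp
  have hTTu : adjoint T u = T u := by
    have h0 : (T - adjoint T) u = 0 := by
      have h1 : (((2 : ℂ) * Complex.I)⁻¹ • ((T - adjoint T) u)) = 0 := by
        simpa using hGu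
      have h2 := smul_eq_zero.1 h1
      rcases h2 with h2 | h2
      · exfalso
        rw [inv_eq_zero] at h2
        simpa using h2
      · exact h2
    rw [ContinuousLinearMap.sub_apply, sub_eq_zero] at h0
    exact h0.symm
  exact ⟨ψ, u, hψ0, heig, huψ, hTTu⟩

lemma bad_orth (T : 𝓚 →L[ℂ] 𝓚) (J : 𝓚 →L[ℂ] 𝓚) (hJ : IsSelfAdjoint J) (r : ℝ)
    {s s' : ℝ} (hss : s ≠ s') {ψ u ψ' u' : 𝓚}
    (heig : ψ = -((r : ℂ) • T u)) (hu : u = (s : ℂ) • ψ - J ψ)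
    (heig' : ψ' = -((r : ℂ) • T u')) (hu' : u' = (s' : ℂ) • ψ' - J ψ')
    (hTu : adjoint T u = T u) : ⟪ψ, ψ'⟫_ℂ = 0 := by
  have hadJ : adjoint J = J := hJ
  have hX : ⟪u, ψ'⟫_ℂ = -((r:ℂ) * ⟪T u, u'⟫_ℂ) := by
    rw [heig', inner_neg_right, inner_smul_right,
      ← ContinuousLinearMap.adjoint_inner_left, hTu]
  have hY : ⟪ψ, u'⟫_ℂ = -((r:ℂ) * ⟪T u, u'⟫_ℂ) := by
    rw [heig, inner_neg_left, inner_smul_left, Complex.conj_ofReal]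
  have hXe : ⟪u, ψ'⟫_ℂ = (s:ℂ) * ⟪ψ, ψ'⟫_ℂ - ⟪ψ, J ψ'⟫_ℂ := by
    rw [hu, inner_sub_left, inner_smul_left, Complex.conj_ofReal]
    congr 1
    conv_lhs => rw [← hadJ]
    rw [ContinuousLinearMap.adjoint_inner_left]
  have hYe : ⟪ψ, u'⟫_ℂ = (s':ℂ) * ⟪ψ, ψ'⟫_ℂ - ⟪ψ, J ψ'⟫_ℂ := by
    rw [hu', inner_sub_right, inner_smul_right]
  have hXY : (s:ℂ) * ⟪ψ, ψ'⟫_ℂ - ⟪ψ, J ψ'⟫_ℂ = (s':ℂ) * ⟪ψ, ψ'⟫_ℂ - ⟪ψ, J ψ'⟫_ℂ := by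
    rw [← hXe, ← hYe, hX, hY]
  have hfin : ((s:ℂ) - (s':ℂ)) * ⟪ψ, ψ'⟫_ℂ = 0 := by linear_combination hXY
  rcases mul_eq_zero.1 hfin with h | h
  · exact absurd (sub_eq_zero.1 h) (by exact_mod_cast hss)
  · exact h

omit [CompleteSpace 𝓚] in
lemma range_separable (T : 𝓚 →L[ℂ] 𝓚) (hT : IsCompactOperator ⇑T) :
    TopologicalSpace.IsSeparable (Set.range ⇑T) := by
  have heq : Set.range ⇑T = ⋃ n : ℕ, ⇑T '' Metric.closedBall 0 (n : ℝ) := by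
    ext x
    simp only [Set.mem_iUnion, Set.mem_image, Set.mem_range]
    constructor
    · rintro ⟨y, rfl⟩
      obtain ⟨n, hn⟩ := exists_nat_ge ‖y‖
      exact ⟨n, y, by simpa [Metric.mem_closedBall, dist_eq_norm] using hn, rfl⟩
    · rintro ⟨n, y, _, rfl⟩; exact ⟨y, rfl⟩
  rw [heq]
  apply TopologicalSpace.IsSeparable.iUnion
  intro n
  obtain ⟨C, hC, hsub⟩ := hT.image_closedBall_subset_compact (n : ℝ)
  exact hC.isSeparable.mono hsub

/-- For a compact operator `T` with positive imaginary part, a self-adjoint `J` and `r ∈ ℝ`,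
there is some `s > ‖J‖` for which `1 + r T (s - J)` is invertible. -/
theorem exists_isUnit_one_add_smul
    (T : 𝓚 →L[ℂ] 𝓚) (hT : IsCompactOperator T)
    (hIm : (((2 : ℂ) * Complex.I)⁻¹ • (T - adjoint T)).IsPositive)
    (J : 𝓚 →L[ℂ] 𝓚) (hJ : IsSelfAdjoint J) (r : ℝ) :
    ∃ s : ℝ, ‖J‖ < s ∧
      IsUnit (1 + (r : ℂ) • (T * ((s : ℂ) • (1 : 𝓚 →L[ℂ] 𝓚) - J))) := by
  by_contra hcon
  push_neg at hcon
  have hex : ∀ s : ℝ, ‖J‖ < s → ∃ ψ u : 𝓚, ψ ≠ 0 ∧ ψ = -((r : ℂ) • T u) ∧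
      u = (s : ℂ) • ψ - J ψ ∧ adjoint T u = T u :=
    fun s hs => bad_point T hT hIm J hJ r s hs (hcon s hs)
  choose! ψ u hψ0 heig hu hTu using hex
  set v : ℝ → 𝓚 := fun s => ((‖ψ s‖ : ℂ))⁻¹ • ψ s with hv
  have hvnorm : ∀ s, ‖J‖ < s → ‖v s‖ = 1 := by
    intro s hs
    have h0 := norm_ne_zero_iff.2 (hψ0 s hs)
    simp [hv, norm_smul, inv_mul_cancel₀ h0]
  have hvrange : ∀ s, ‖J‖ < s → v s ∈ Set.range ⇑T := by
    intro s hs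
    refine ⟨((‖ψ s‖ : ℂ))⁻¹ • (-((r : ℂ) • u s)), ?_⟩
    rw [map_smul, map_neg, map_smul, hv]
    simp only
    congr 1
    rw [← heig s hs]
  have hvorth : ∀ s s', ‖J‖ < s → ‖J‖ < s' → s ≠ s' → ⟪v s, v s'⟫_ℂ = 0 := by
    intro s s' hs hs' hss
    have h0 : ⟪ψ s, ψ s'⟫_ℂ = 0 :=
      bad_orth T J hJ r hss (heig s hs) (hu s hs) (heig s' hs') (hu s' hs') (hTu s hs)
    rw [hv]
    simp only
    rw [inner_smul_left, inner_smul_right, h0, mul_zero, mul_zero]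
  have hvdist : ∀ s s', ‖J‖ < s → ‖J‖ < s' → s ≠ s' → 1 ≤ dist (v s) (v s') := by
    intro s s' hs hs' hss
    rw [dist_eq_norm]
    have hns : ‖v s - v s'‖ ^ 2 = ‖v s‖ ^ 2 - 2 * RCLike.re ⟪v s, v s'⟫_ℂ + ‖v s'‖ ^ 2 :=
      @norm_sub_sq ℂ _ _ _ _ (v s) (v s')
    rw [hvorth s s' hs hs' hss, hvnorm s hs, hvnorm s' hs'] at hns
    simp only [map_zero, mul_zero, sub_zero, one_pow] at hns
    nlinarith [norm_nonneg (v s - v s')]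
  obtain ⟨c, hc_count, hc_sub⟩ := range_separable T hT
  have hclose : ∀ s : ℝ, ‖J‖ < s → ∃ b ∈ c, dist (v s) b < 1/2 := by
    intro s hs
    have h1 : v s ∈ closure c := hc_sub (hvrange s hs)
    rw [Metric.mem_closure_iff] at h1
    exact h1 (1/2) (by norm_num)
  choose! d hd1 hd2 using hclose
  have hcnt : (Set.Ioi ‖J‖).Countable := by
    haveI : Countable c := hc_count.to_subtype
    rw [← Set.countable_coe_iff]
    have hinj : Function.Injective
        (fun x : ↥(Set.Ioi ‖J‖) => (⟨d x, hd1 x x.2⟩ : ↥c)) := by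
      rintro x y hxy
      by_contra hne
      have hxy' : d (x : ℝ) = d (y : ℝ) := congrArg Subtype.val hxy
      have hne' : (x : ℝ) ≠ (y : ℝ) := fun h => hne (Subtype.ext h)
      have h1 := hd2 x x.2
      have h2 := hd2 y y.2
      have h3 := hvdist x y x.2 y.2 hne'
      have : dist (v x) (v y) ≤ dist (v (x:ℝ)) (d (x:ℝ)) + dist (d (y:ℝ)) (v (y:ℝ)) := by
        rw [hxy']
        exact dist_triangle _ _ _
      rw [dist_comm (d (y:ℝ))] at this
      linarith
    exact hinj.countable
  have := hcnt.le_aleph0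
  rw [Cardinal.mk_Ioi_real] at this
  exact absurd this (not_le.2 Cardinal.aleph0_lt_continuum)
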